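/- The LF-mapping is a permutation of {0,…,n−1} whose sequence LF(0),…,LF(n−1) consists of at most r unbroken incrementing subsequences, where r is the number of maximal runs of equal characters in the BWT. That is, |{i : i = 0 ∨ LF(i) ≠ LF(i−1)+1}| ≤ r. -/
import Mathlib

def finPred {n : ℕ} (i : Fin n) : Fin n :=
  ⟨i.val - 1, Nat.lt_of_le_of_lt (Nat.sub_le _ _) i.isLt⟩

/-- C(c) = number of positions j with BWT[j] < c. -/
def Ccount {n : ℕ} {α : Type*} [LinearOrder α] (B : Fin n → α) (c : α) : ℕ :=
  (Finset.univ.filter (fun j => B j < c)).card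

/-- rank_c(B, i) = number of positions j < i with B[j] = c. -/
def rank {n : ℕ} {α : Type*} [LinearOrder α] (B : Fin n → α) (c : α) (i : Fin n) : ℕ :=
  (Finset.univ.filter (fun j => j < i ∧ B j = c)).card

/-- LF(i) = C(BWT[i]) + rank_{BWT[i]}(BWT, i). -/
def LF {n : ℕ} {α : Type*} [LinearOrder α] (B : Fin n → α) (i : Fin n) : ℕ :=
  Ccount B (B i) + rank B (B i) i

/-- Run heads: positions i with i = 0 or B[i] ≠ B[i−1]. -/
def runHeads {n : ℕ} {α : Type*} [LinearOrder α] (B : Fin n → α) : Finset (Fin n) :=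
  Finset.univ.filter (fun i => i.val = 0 ∨ B i ≠ B (finPred i))

lemma LF_eq_card {n : ℕ} {α : Type*} [LinearOrder α] (B : Fin n → α) (i : Fin n) :
    LF B i = (Finset.univ.filter (fun j => B j < B i ∨ (B j = B i ∧ j < i))).card := by
  unfold LF Ccount rank
  rw [← Finset.card_union_of_disjoint]
  · congr 1
    ext j
    simp only [Finset.mem_union, Finset.mem_filter, Finset.mem_univ, true_and]
    tauto
  · rw [Finset.disjoint_filter]
    intro j _ h1 h2
    exact absurd h2.2 (ne_of_lt h1)

lemma LF_lt_LF {n : ℕ} {α : Type*} [LinearOrder α] (B : Fin n → α) {i j : Fin n}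
    (h : B i < B j ∨ (B i = B j ∧ i < j)) : LF B i < LF B j := by
  rw [LF_eq_card, LF_eq_card]
  apply Finset.card_lt_card
  rw [Finset.ssubset_iff_of_subset]
  · refine ⟨i, ?_, ?_⟩
    · simp only [Finset.mem_filter, Finset.mem_univ, true_and]; exact h
    · simp only [Finset.mem_filter, Finset.mem_univ, true_and]
      push_neg
      exact ⟨le_refl _, le_refl i⟩
  · intro k hk
    simp only [Finset.mem_filter, Finset.mem_univ, true_and] at hk ⊢
    rcases h with h | ⟨he, hij⟩
    · rcases hk with hk | ⟨hk, _⟩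
      · exact Or.inl (hk.trans h)
      · exact Or.inl (hk ▸ h)
    · rcases hk with hk | ⟨hk, hki⟩
      · exact Or.inl (he ▸ hk)
      · exact Or.inr ⟨he ▸ hk, hki.trans hij⟩

lemma LF_injective {n : ℕ} {α : Type*} [LinearOrder α] (B : Fin n → α) :
    Function.Injective (LF B) := by
  intro i j hij
  by_contra hne
  rcases lt_trichotomy (B i) (B j) with h | h | h
  · exact absurd hij (ne_of_lt (LF_lt_LF B (Or.inl h)))
  · rcases lt_or_gt_of_ne (fun he : i = j => hne he) with h2 | h2
    · exact absurd hij (ne_of_lt (LF_lt_LF B (Or.inr ⟨h, h2⟩)))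
    · exact absurd hij.symm (ne_of_lt (LF_lt_LF B (Or.inr ⟨h.symm, h2⟩)))
  · exact absurd hij.symm (ne_of_lt (LF_lt_LF B (Or.inl h)))

lemma LF_lt {n : ℕ} {α : Type*} [LinearOrder α] (B : Fin n → α) (i : Fin n) :
    LF B i < n := by
  rw [LF_eq_card]
  calc (Finset.univ.filter (fun j => B j < B i ∨ (B j = B i ∧ j < i))).card
      ≤ (Finset.univ.erase i).card := by
        apply Finset.card_le_card
        intro k hk
        simp only [Finset.mem_filter, Finset.mem_univ, true_and] at hk
        refine Finset.mem_erase.2 ⟨?_, Finset.mem_univ k⟩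
        rintro rfl
        rcases hk with hk | ⟨_, hk⟩
        · exact absurd hk (lt_irrefl _)
        · exact absurd hk (lt_irrefl _)
    _ < n := by
        rw [Finset.card_erase_of_mem (Finset.mem_univ i), Finset.card_univ, Fintype.card_fin]
        have := i.isLt; omega

lemma LF_succ {n : ℕ} {α : Type*} [LinearOrder α] (B : Fin n → α) (i : Fin n)
    (h0 : i.val ≠ 0) (he : B i = B (finPred i)) :
    LF B i = LF B (finPred i) + 1 := by
  set p := finPred i with hp
  have hpv : p.val + 1 = i.val := by
    simp only [hp, finPred]
    omega
  unfold LF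
  rw [he]
  have hrank : rank B (B p) i = rank B (B p) p + 1 := by
   unfold rank
   have : (Finset.univ.filter (fun j => j < i ∧ B j = B p))
      = insert p (Finset.univ.filter (fun j => j < p ∧ B j = B p)) := by
    ext j
    simp only [Finset.mem_insert, Finset.mem_filter, Finset.mem_univ, true_and,
      Fin.lt_iff_val_lt_val]
    constructor
    · rintro ⟨hji, hjB⟩
      rcases Nat.lt_or_ge j.val p.val with h | h
      · exact Or.inr ⟨h, hjB⟩
      · left; apply Fin.ext; omega
    · rintro (rfl | ⟨hjp, hjB⟩)
      · exact ⟨by omega, rfl⟩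
      · exact ⟨by omega, hjB⟩
   rw [this, Finset.card_insert_of_notMem]
   simp only [Finset.mem_filter, Finset.mem_univ, true_and, not_and]
   intro h; exact absurd h (lt_irrefl _)
  omega

/-- LF is a bijection of {0,…,n−1} and its sequence of values consists of at most r
unbroken incrementing subsequences, where r is the number of runs in the BWT. -/
theorem stmt4 {n : ℕ} (hn : 1 ≤ n) {α : Type*} [LinearOrder α]
    (B : Fin n → α) (r : ℕ) (hr : r = (runHeads B).card) :
    (∀ i : Fin n, LF B i < n) ∧ (∀ m : ℕ, m < n → ∃! i : Fin n, LF B i = m) ∧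
    (Finset.univ.filter
      (fun i : Fin n => i.val = 0 ∨ LF B i ≠ LF B (finPred i) + 1)).card ≤ r := by
  refine ⟨LF_lt B, ?_, ?_⟩
  · intro m hm
    set f : Fin n → Fin n := fun i => ⟨LF B i, LF_lt B i⟩ with hf
    have hinj : Function.Injective f := by
      intro a b hab
      exact LF_injective B (congrArg Fin.val hab)
    have hsurj : Function.Surjective f := Finite.surjective_of_injective hinj
    obtain ⟨i, hi⟩ := hsurj ⟨m, hm⟩
    have hi' : LF B i = m := congrArg Fin.val hi
    exact ⟨i, hi', fun j hj => LF_injective B (hj.trans hi'.symm)⟩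
  · rw [hr]
    apply Finset.card_le_card
    intro i hi
    simp only [Finset.mem_filter, Finset.mem_univ, true_and] at hi
    simp only [runHeads, Finset.mem_filter, Finset.mem_univ, true_and]
    by_cases h0 : i.val = 0
    · exact Or.inl h0
    · rcases hi with hi | hi
      · exact Or.inl hi
      · exact Or.inr (fun he => hi (LF_succ B i h0 he))
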